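/- Let x : H_τ → M be a function into a Hilbert space which is homogeneous of degree 0 on the cone H_τ, let τ ∈ 𝕋², ω ∈ 𝕋, y ∈ M, and define, for δ ∈ H_τ, Dφ(δ) := -ω⟨δ·x(δ), τ·y⟩. If Re⟨δ·x(δ), τ·y⟩ ≥ 0 for all δ ∈ H_τ, then there exists a function h in the Pick class, real-valued and analytic on (0,∞), such that Dφ(δ) = ω·conj(τ²)δ²·h(conj(τ²)δ²/(conj(τ¹)δ¹)) for all δ ∈ H_τ, provided additionally that δ ↦ ⟨δ·x(δ), τ·y⟩ is holomorphic on H_τ. -/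

import Mathlib

open Complex

private lemma aux_eps (A B ε₀ : ℝ) (h0 : 0 < ε₀)
    (H : ∀ ε : ℝ, 0 < ε → ε < ε₀ → 0 ≤ A + ε * B) : 0 ≤ A := by
  by_contra hA
  push_neg at hA
  have hB1 : (0:ℝ) < |B| + 1 := by positivity
  set ε : ℝ := min (ε₀ / 2) (-A / (2 * (|B| + 1))) with hε
  have hεpos : 0 < ε := lt_min (by linarith) (div_pos (by linarith) (by positivity))
  have hεlt : ε < ε₀ := lt_of_le_of_lt (min_le_left _ _) (by linarith)
  have h1 := H ε hεpos hεlt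
  have h2 : ε ≤ -A / (2 * (|B| + 1)) := min_le_right _ _
  have h3 : ε * B ≤ ε * |B| := mul_le_mul_of_nonneg_left (le_abs_self B) hεpos.le
  have h4 : ε * |B| ≤ (-A / (2 * (|B| + 1))) * |B| :=
    mul_le_mul_of_nonneg_right h2 (abs_nonneg B)
  have h5 : (-A / (2 * (|B| + 1))) * |B| ≤ -A / 2 := by
    rw [div_mul_eq_mul_div, div_le_div_iff₀ (by positivity) (by norm_num)]
    nlinarith [abs_nonneg B]
  linarith

private lemma re_cpow_pos (z : ℂ) (hz : z ∈ Complex.slitPlane) (c : ℝ) (hc : |c| ≤ 1/2) :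
    0 < (z ^ (c : ℂ)).re := by
  have hz0 : z ≠ 0 := Complex.slitPlane_ne_zero hz
  rw [Complex.cpow_def_of_ne_zero hz0, Complex.exp_re]
  apply mul_pos (Real.exp_pos _)
  apply Real.cos_pos_of_mem_Ioo
  have him : (Complex.log z * (c:ℂ)).im = z.arg * c := by
    simp [Complex.mul_im, Complex.log_im]
  rw [him]
  have h1 : -Real.pi < z.arg := Complex.neg_pi_lt_arg z
  have h2 : z.arg < Real.pi :=
    lt_of_le_of_ne (Complex.arg_le_pi z) (Complex.slitPlane_arg_ne_pi hz)
  have habs : |z.arg * c| < Real.pi / 2 := by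
    rcases eq_or_ne c 0 with h | h
    · simp [h]; positivity
    · have hcpos : 0 < |c| := abs_pos.mpr h
      calc |z.arg * c| = |z.arg| * |c| := abs_mul _ _
        _ < Real.pi * |c| := by
            apply mul_lt_mul_of_pos_right _ hcpos
            exact abs_lt.mpr ⟨h1, h2⟩
        _ ≤ Real.pi * (1/2) := mul_le_mul_of_nonneg_left hc Real.pi_pos.le
        _ = Real.pi / 2 := by ring
  rw [abs_lt] at habs
  exact ⟨habs.1, habs.2⟩

/-- Theorem `pickfunc` in abstract form: from a 0-homogeneous holomorphic `x` on
`H_τ` with `Re⟨δ·x(δ), τ·y⟩ ≥ 0`, one obtains a Pick-class function `h`, real and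
analytic on `(0,∞)`, with
`-ω⟨δ·x(δ), τ·y⟩ = ω·(conj τ²)δ²·h((conj τ²)δ²/((conj τ¹)δ¹))`. -/
theorem pick_function_from_homogeneous
    {M₁ M₂ : Type*} [NormedAddCommGroup M₁] [InnerProductSpace ℂ M₁]
    [NormedAddCommGroup M₂] [InnerProductSpace ℂ M₂]
    (τ : ℂ × ℂ) (hτ1 : ‖τ.1‖ = 1) (hτ2 : ‖τ.2‖ = 1)
    (ω : ℂ) (hω : ‖ω‖ = 1)
    (x : ℂ × ℂ → M₁ × M₂) (y : M₁ × M₂)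
    (Hτ : Set (ℂ × ℂ))
    (hHτ : Hτ = {δ : ℂ × ℂ | 0 < ((starRingEnd ℂ) τ.1 * δ.1).re ∧
                              0 < ((starRingEnd ℂ) τ.2 * δ.2).re})
    (hhom : ∀ δ ∈ Hτ, ∀ z : ℂ, z • δ ∈ Hτ → x (z • δ) = x δ)
    (f : ℂ × ℂ → ℂ)
    (hf : ∀ δ : ℂ × ℂ, f δ =
      inner ℂ (τ.1 • y.1) (δ.1 • (x δ).1) + inner ℂ (τ.2 • y.2) (δ.2 • (x δ).2))
    (hpos : ∀ δ ∈ Hτ, 0 ≤ (f δ).re)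
    (hhol : DifferentiableOn ℂ f Hτ) :
    ∃ h : ℂ → ℂ,
      DifferentiableOn ℂ h {z : ℂ | 0 < z.im} ∧
      (∀ z : ℂ, 0 < z.im → 0 ≤ (h z).im) ∧
      (∀ r : ℝ, 0 < r → AnalyticAt ℂ h (r : ℂ) ∧ (h (r : ℂ)).im = 0) ∧
      (∀ δ ∈ Hτ, -ω * f δ =
        ω * ((starRingEnd ℂ) τ.2 * δ.2) *
          h ((starRingEnd ℂ) τ.2 * δ.2 / ((starRingEnd ℂ) τ.1 * δ.1))) := by
  classical
  -- unimodularity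
  have hone1 : τ.1 * (starRingEnd ℂ) τ.1 = 1 := by
    rw [Complex.mul_conj]
    rw [show Complex.normSq τ.1 = 1 by
      rw [Complex.normSq_eq_norm_sq, hτ1]; norm_num]
    norm_num
  have hone2 : τ.2 * (starRingEnd ℂ) τ.2 = 1 := by
    rw [Complex.mul_conj]
    rw [show Complex.normSq τ.2 = 1 by
      rw [Complex.normSq_eq_norm_sq, hτ2]; norm_num]
    norm_num
  have hcoord1 : ∀ w : ℂ, (starRingEnd ℂ) τ.1 * (τ.1 * w) = w := by
    intro w; rw [← mul_assoc, mul_comm ((starRingEnd ℂ) τ.1) τ.1, hone1, one_mul]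
  have hcoord2 : ∀ w : ℂ, (starRingEnd ℂ) τ.2 * (τ.2 * w) = w := by
    intro w; rw [← mul_assoc, mul_comm ((starRingEnd ℂ) τ.2) τ.2, hone2, one_mul]
  -- the square root functions
  set s : ℂ → ℂ := fun z => z ^ ((((1:ℝ)/2 : ℝ)) : ℂ) with hsdef
  set t : ℂ → ℂ := fun z => z ^ (((-(1/2) : ℝ)) : ℂ) with htdef
  set g : ℂ → ℂ := fun z => s z * f (τ.1 * t z, τ.2 * s z) with hgdef
  have hsre : ∀ z ∈ Complex.slitPlane, 0 < (s z).re := by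
    intro z hz; exact re_cpow_pos z hz (1/2) (abs_le.mpr ⟨by norm_num, by norm_num⟩)
  have htre : ∀ z ∈ Complex.slitPlane, 0 < (t z).re := by
    intro z hz; exact re_cpow_pos z hz (-(1/2)) (abs_le.mpr ⟨by norm_num, by norm_num⟩)
  have hst : ∀ z : ℂ, z ≠ 0 → t z * s z = 1 := by
    intro z hz0
    rw [hsdef, htdef]
    rw [← Complex.cpow_add _ _ hz0]
    norm_num
  have hss : ∀ z : ℂ, z ≠ 0 → s z * s z = z := by
    intro z hz0
    rw [hsdef]
    rw [← Complex.cpow_add _ _ hz0]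
    norm_num
  have htz : ∀ z : ℂ, z ≠ 0 → t z * z = s z := by
    intro z hz0
    have h1 := hst z hz0
    have h2 := hss z hz0
    calc t z * z = t z * (s z * s z) := by rw [h2]
      _ = (t z * s z) * s z := by ring
      _ = s z := by rw [h1, one_mul]
  -- membership criteria
  have hmemδ : ∀ z ∈ Complex.slitPlane, ∀ ζ : ℂ, 0 < ζ.re → 0 < (ζ * z).re →
      (τ.1 * ζ, τ.2 * (ζ * z)) ∈ Hτ := by
    intro z hz ζ h1 h2
    rw [hHτ]
    refine ⟨?_, ?_⟩
    · simpa [hcoord1] using h1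
    · simpa [hcoord2] using h2
  have hδz : ∀ z ∈ Complex.slitPlane, (τ.1 * t z, τ.2 * s z) ∈ Hτ := by
    intro z hz
    have hz0 : z ≠ 0 := Complex.slitPlane_ne_zero hz
    have := hmemδ z hz (t z) (htre z hz) (by rw [htz z hz0]; exact hsre z hz)
    rwa [htz z hz0] at this
  -- homogeneity of f
  have hfh : ∀ δ ∈ Hτ, ∀ w : ℂ, w • δ ∈ Hτ → f (w • δ) = w * f δ := by
    intro δ hδ w hw
    rw [hf, hf, hhom δ hδ w hw]
    simp only [Prod.smul_fst, Prod.smul_snd, smul_eq_mul, mul_smul, inner_smul_right]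
    ring
  -- the cone identity for g
  have hgkey : ∀ z ∈ Complex.slitPlane, ∀ ζ : ℂ, 0 < ζ.re → 0 < (ζ * z).re →
      f (τ.1 * ζ, τ.2 * (ζ * z)) = ζ * g z := by
    intro z hz ζ h1 h2
    have hz0 : z ≠ 0 := Complex.slitPlane_ne_zero hz
    have heq : (τ.1 * ζ, τ.2 * (ζ * z)) = (ζ * s z) • ((τ.1 * t z, τ.2 * s z) : ℂ × ℂ) := by
      have h1' := hst z hz0
      have h2' := hss z hz0
      refine Prod.ext ?_ ?_
      · simp only [Prod.smul_fst, smul_eq_mul]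
        linear_combination (-τ.1 * ζ) * h1'
      · simp only [Prod.smul_snd, smul_eq_mul]
        linear_combination (-τ.2 * ζ) * h2'
    rw [heq, hfh _ (hδz z hz) _ (heq ▸ hmemδ z hz ζ h1 h2)]
    rw [hgdef]
    ring
  have hcone : ∀ z ∈ Complex.slitPlane, ∀ ζ : ℂ, 0 < ζ.re → 0 < (ζ * z).re →
      0 ≤ (ζ * g z).re := by
    intro z hz ζ h1 h2
    rw [← hgkey z hz ζ h1 h2]
    exact hpos _ (hmemδ z hz ζ h1 h2)
  -- openness of Hτ and slitPlane facts
  have hHτopen : IsOpen Hτ := by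
    rw [hHτ]
    exact (isOpen_lt continuous_const
        (Complex.continuous_re.comp (continuous_const.mul continuous_fst))).and
      (isOpen_lt continuous_const
        (Complex.continuous_re.comp (continuous_const.mul continuous_snd)))
  -- differentiability of h on the slit plane
  have hdΩ : ∀ z ∈ Complex.slitPlane, DifferentiableAt ℂ (fun z => -g z / z) z := by
    intro z hz
    have hz0 : z ≠ 0 := Complex.slitPlane_ne_zero hz
    have ds : DifferentiableAt ℂ s z :=
      HasDerivAt.differentiableAt (HasStrictDerivAt.hasDerivAt (Complex.hasStrictDerivAt_cpow_const hz))
    have dt : DifferentiableAt ℂ t z :=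
      HasDerivAt.differentiableAt (HasStrictDerivAt.hasDerivAt (Complex.hasStrictDerivAt_cpow_const hz))
    have dφ : DifferentiableAt ℂ (fun z => ((τ.1 * t z, τ.2 * s z) : ℂ × ℂ)) z :=
      DifferentiableAt.prodMk ((differentiableAt_const _).mul dt) ((differentiableAt_const _).mul ds)
    have dfδ : DifferentiableAt ℂ f (τ.1 * t z, τ.2 * s z) :=
      hhol.differentiableAt (hHτopen.mem_nhds (hδz z hz))
    have dg : DifferentiableAt ℂ g z := by
      rw [hgdef]
      exact ds.mul (dfδ.comp z dφ)
    exact (dg.neg).div differentiableAt_id hz0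
  refine ⟨fun z => -g z / z, ?_, ?_, ?_, ?_⟩
  · -- differentiable on upper half-plane
    intro z hz
    have hzΩ : z ∈ Complex.slitPlane :=
      Complex.mem_slitPlane_iff.mpr (Or.inr (ne_of_gt hz))
    exact (hdΩ z hzΩ).differentiableWithinAt
  · -- nonnegative imaginary part on upper half-plane
    intro z hz
    have hzΩ : z ∈ Complex.slitPlane :=
      Complex.mem_slitPlane_iff.mpr (Or.inr (ne_of_gt hz))
    have hz0 : z ≠ 0 := Complex.slitPlane_ne_zero hzΩ
    have hnsq : 0 < Complex.normSq z := Complex.normSq_pos.mpr hz0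
    have key : 0 ≤ (Complex.I * (starRingEnd ℂ) z * g z).re := by
      apply aux_eps _ (((starRingEnd ℂ) z * g z).re) (z.im / (|z.re| + 1))
        (by positivity)
      intro ε hε hε'
      have hζ : 0 < ((Complex.I + (ε:ℂ)) * (starRingEnd ℂ) z).re := by
        simp only [Complex.add_re, Complex.mul_re, Complex.add_im, Complex.I_re,
          Complex.I_im, Complex.ofReal_re, Complex.ofReal_im, Complex.conj_re,
          Complex.conj_im]
        have := le_abs_self z.re
        have := neg_abs_le z.re
        have h8 : ε * (|z.re| + 1) < z.im :=
          (lt_div_iff₀ (by positivity)).mp hε'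
        nlinarith [abs_nonneg z.re]
      have hζz : 0 < (((Complex.I + (ε:ℂ)) * (starRingEnd ℂ) z) * z).re := by
        have heq : ((Complex.I + (ε:ℂ)) * (starRingEnd ℂ) z) * z
            = (Complex.I + (ε:ℂ)) * (Complex.normSq z : ℂ) := by
          rw [mul_assoc, mul_comm ((starRingEnd ℂ) z) z, Complex.mul_conj]
        rw [heq]
        simp only [Complex.mul_re, Complex.add_re, Complex.I_re, Complex.ofReal_re,
          Complex.add_im, Complex.I_im, Complex.ofReal_im]
        have : (0:ℝ) < ε * Complex.normSq z := by positivity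
        nlinarith
      have hc := hcone z hzΩ _ hζ hζz
      have hexp : ((Complex.I + (ε:ℂ)) * (starRingEnd ℂ) z) * g z
          = Complex.I * (starRingEnd ℂ) z * g z + (ε:ℂ) * ((starRingEnd ℂ) z * g z) := by
        ring
      rw [hexp, Complex.add_re] at hc
      rw [show ((ε:ℂ) * ((starRingEnd ℂ) z * g z)).re
          = ε * ((starRingEnd ℂ) z * g z).re by
        simp [Complex.mul_re, Complex.ofReal_re, Complex.ofReal_im]] at hc
      exact hc
    have him : ((-g z) / z).im = (Complex.I * (starRingEnd ℂ) z * g z).re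
        / Complex.normSq z := by
      rw [Complex.div_im]
      simp only [Complex.neg_im, Complex.neg_re, Complex.mul_re, Complex.mul_im,
        Complex.I_re, Complex.I_im, Complex.conj_re, Complex.conj_im]
      ring
    show 0 ≤ (-g z / z).im
    rw [him]
    exact div_nonneg key hnsq.le
  · -- real and analytic on (0,∞)
    intro r hr
    have hrΩ : (r:ℂ) ∈ Complex.slitPlane := by
      rw [Complex.mem_slitPlane_iff]
      left
      simpa using hr
    have hr0 : (r:ℂ) ≠ 0 := by
      simpa using ne_of_gt hr
    constructor
    · have hdon : DifferentiableOn ℂ (fun z => -g z / z) Complex.slitPlane :=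
        fun z hz => (hdΩ z hz).differentiableWithinAt
      exact hdon.analyticAt (Complex.isOpen_slitPlane.mem_nhds hrΩ)
    · -- imaginary part vanishes at r
      have key : ∀ σ : ℂ, σ.re = 0 → σ.im = 1 ∨ σ.im = -1 →
          0 ≤ (σ * g r).re := by
        intro σ hσre hσim
        apply aux_eps _ ((g (r:ℂ)).re) 1 one_pos
        intro ε hε hε'
        have hζ : 0 < ((σ + (ε:ℂ))).re := by
          simp [Complex.add_re, hσre, Complex.ofReal_re, hε]
        have hζz : 0 < ((σ + (ε:ℂ)) * (r:ℂ)).re := by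
          have heq : ((σ + (ε:ℂ)) * (r:ℂ)).re = (σ.re + ε) * r := by
            simp [Complex.mul_re, Complex.add_re, Complex.add_im]
          rw [heq, hσre, zero_add]
          exact mul_pos hε hr
        have hc := hcone (r:ℂ) hrΩ _ hζ hζz
        have hexp : ((σ + (ε:ℂ))) * g (r:ℂ) = σ * g (r:ℂ) + (ε:ℂ) * g (r:ℂ) := by
          ring
        rw [hexp, Complex.add_re] at hc
        rw [show ((ε:ℂ) * g (r:ℂ)).re = ε * (g (r:ℂ)).re by
          simp [Complex.mul_re, Complex.ofReal_re, Complex.ofReal_im]] at hc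
        exact hc
      have k1 := key Complex.I (by simp) (Or.inl (by simp))
      have k2 := key (-Complex.I) (by simp) (Or.inr (by simp))
      have hgim : (g (r:ℂ)).im = 0 := by
        simp only [Complex.mul_re, Complex.I_re, Complex.I_im, Complex.neg_re,
          Complex.neg_im] at k1 k2
        linarith
      show (-g (r:ℂ) / (r:ℂ)).im = 0
      rw [Complex.div_im]
      simp [Complex.neg_im, Complex.neg_re, hgim, Complex.ofReal_im]
  · -- the representation formula
    intro δ hδ
    have hδ' := hδ
    rw [hHτ] at hδ'
    obtain ⟨h1, h2⟩ := hδ'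
    set ζ1 : ℂ := (starRingEnd ℂ) τ.1 * δ.1 with hζ1def
    set ζ2 : ℂ := (starRingEnd ℂ) τ.2 * δ.2 with hζ2def
    have hζ1 : ζ1 ≠ 0 := by
      intro h; rw [h] at h1; simp at h1
    have hζ2 : ζ2 ≠ 0 := by
      intro h; rw [h] at h2; simp at h2
    set z : ℂ := ζ2 / ζ1 with hzdef
    have hz0 : z ≠ 0 := div_ne_zero hζ2 hζ1
    have hζ2eq : ζ2 = z * ζ1 := by
      rw [hzdef]; field_simp
    have hzΩ : z ∈ Complex.slitPlane := by
      rw [Complex.mem_slitPlane_iff]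
      by_contra hc
      push_neg at hc
      obtain ⟨ha, hb⟩ := hc
      have hre : ζ2.re = z.re * ζ1.re - z.im * ζ1.im := by
        rw [hζ2eq]; simp [Complex.mul_re]
      rw [hb] at hre
      nlinarith
    have hδ1 : δ.1 = τ.1 * ζ1 := by
      rw [hζ1def, ← mul_assoc, hone1, one_mul]
    have hδ2 : δ.2 = τ.2 * ζ2 := by
      rw [hζ2def, ← mul_assoc, hone2, one_mul]
    have hts : t z * s z = 1 := hst z hz0
    have htzz : t z * z = s z := htz z hz0
    set w : ℂ := t z / ζ1 with hwdef
    have hwδ : w • δ = ((τ.1 * t z, τ.2 * s z) : ℂ × ℂ) := by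
      refine Prod.ext ?_ ?_
      · simp only [Prod.smul_fst, smul_eq_mul]
        rw [hwdef, hδ1]; field_simp
      · simp only [Prod.smul_snd, smul_eq_mul]
        rw [hwdef, hδ2, hζ2eq]
        rw [div_mul_eq_mul_div, div_eq_iff hζ1]
        linear_combination (τ.2 * ζ1) * htzz
    have hmemδz := hδz z hzΩ
    have hfw : f (w • δ) = w * f δ := hfh δ hδ w (by rw [hwδ]; exact hmemδz)
    have hgz : g z = f δ / ζ1 := by
      rw [hgdef]
      simp only []
      rw [← hwδ, hfw, hwdef]
      field_simp
      linear_combination (f δ) * hts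
    show -ω * f δ = ω * ζ2 * (-g z / z)
    rw [hgz, hζ2eq]
    field_simp
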